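/- Let (X_n)_{n∈ℕ} be infinite subsets of ℕ with X_{n+1} ⊆* X_n for all n, and let α_n ∈ 𝕋^ℕ satisfy α_n·α_m⁻¹ ∈ F_{X_n} whenever n ≤ m. Let Y be an infinite subset of ℕ with Y ⊆* X_n for every n. Then there exists β ∈ 𝕋^ℕ such that β·α_n⁻¹ ∈ F_{X_n} for every n ∈ ℕ. -/

import Mathlib

open Filter Topology MultiplierAlgebra

noncomputable section

/-- `Δ_I(α,β) = max_{i,j ∈ I} |α(i)·conj(α(j)) − β(i)·conj(β(j))|`
(the maximum over the empty set being `0`). -/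
def Delta (I : Finset ℕ) (α β : ℕ → Circle) : ℝ :=
  ((I ×ˢ I).sup fun p : ℕ × ℕ =>
    ‖(α p.1 : ℂ) * (starRingEnd ℂ) (α p.2 : ℂ) -
      (β p.1 : ℂ) * (starRingEnd ℂ) (β p.2 : ℂ)‖₊ : NNReal)

/-- `n(X,j)`: the `j`-th element of `{0} ∪ X` in increasing order. -/
def nEnum (X : Set ℕ) (j : ℕ) : ℕ := Nat.nth (· ∈ insert 0 X) j

/-- `I(X,j) = [n(X,j), n(X,j+1))`, as a finite set of naturals. -/
def intvl (X : Set ℕ) (j : ℕ) : Finset ℕ := Finset.Ico (nEnum X j) (nEnum X (j + 1))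

/-- Membership in `F_X`: `lim_j Δ_{I(X,j) ∪ I(X,j+1)}(α, 1) = 0`. -/
def memF (X : Set ℕ) (α : ℕ → Circle) : Prop :=
  Tendsto (fun j => Delta (intvl X j ∪ intvl X (j + 1)) α 1) atTop (𝓝 0)

/-- `Y ⊆* X`: almost inclusion, i.e. `Y \ X` is finite. -/
def AlmostSubset (Y X : Set ℕ) : Prop := (Y \ X).Finite

noncomputable def q (γ : ℕ → Circle) (i i' : ℕ) : ℝ :=
  ‖((γ i * (γ i')⁻¹ : Circle) : ℂ) - 1‖

lemma q_eq_norm (γ : ℕ → Circle) (i i' : ℕ) :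
    q γ i i' = ‖(γ i : ℂ) * (starRingEnd ℂ) ((γ i' : ℂ)) - 1‖ := by
  rw [q, Circle.coe_mul, Circle.coe_inv_eq_conj]

lemma norm_circle (z : Circle) : ‖(z : ℂ)‖ = 1 := by
  exact Circle.norm_coe z

lemma norm_mul_sub_one (z w : Circle) :
    ‖((z * w : Circle) : ℂ) - 1‖ ≤ ‖(z : ℂ) - 1‖ + ‖(w : ℂ) - 1‖ := by
  have : ((z * w : Circle) : ℂ) - 1 = ((z : ℂ) - 1) * w + ((w : ℂ) - 1) := by
    push_cast; ring
  rw [this]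
  calc ‖((z : ℂ) - 1) * w + ((w : ℂ) - 1)‖
      ≤ ‖((z : ℂ) - 1) * w‖ + ‖(w : ℂ) - 1‖ := norm_add_le _ _
    _ = ‖(z : ℂ) - 1‖ + ‖(w : ℂ) - 1‖ := by rw [norm_mul, norm_circle, mul_one]

lemma norm_inv_sub_one (z : Circle) : ‖((z⁻¹ : Circle) : ℂ) - 1‖ = ‖(z : ℂ) - 1‖ := by
  rw [Circle.coe_inv_eq_conj]
  calc ‖(starRingEnd ℂ) (z : ℂ) - 1‖ = ‖(starRingEnd ℂ) ((z : ℂ) - 1)‖ := by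
        rw [map_sub, map_one]
    _ = ‖(z : ℂ) - 1‖ := RCLike.norm_conj _

lemma q_symm (γ : ℕ → Circle) (i i' : ℕ) : q γ i i' = q γ i' i := by
  rw [q, q, show γ i' * (γ i)⁻¹ = (γ i * (γ i')⁻¹)⁻¹ by group, norm_inv_sub_one]

lemma q_triangle (γ : ℕ → Circle) (i p i' : ℕ) : q γ i i' ≤ q γ i p + q γ p i' := by
  rw [q, q, q, show γ i * (γ i')⁻¹ = (γ i * (γ p)⁻¹) * (γ p * (γ i')⁻¹) by group]
  exact norm_mul_sub_one _ _

lemma q_nonneg (γ : ℕ → Circle) (i i' : ℕ) : 0 ≤ q γ i i' := norm_nonneg _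



lemma delta_nonneg (I : Finset ℕ) (α β : ℕ → Circle) : 0 ≤ Delta I α β :=
  NNReal.coe_nonneg _

lemma le_delta {I : Finset ℕ} {α β : ℕ → Circle} {i j : ℕ} (hi : i ∈ I) (hj : j ∈ I) :
    ‖(α i : ℂ) * (starRingEnd ℂ) (α j : ℂ) -
      (β i : ℂ) * (starRingEnd ℂ) (β j : ℂ)‖ ≤ Delta I α β := by
  have h := Finset.le_sup (f := fun p : ℕ × ℕ =>
    (‖(α p.1 : ℂ) * (starRingEnd ℂ) (α p.2 : ℂ) -
      (β p.1 : ℂ) * (starRingEnd ℂ) (β p.2 : ℂ)‖₊ : NNReal))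
    (Finset.mem_product.2 ⟨hi, hj⟩ : (i, j) ∈ I ×ˢ I)
  exact_mod_cast NNReal.coe_le_coe.2 h

lemma delta_le {I : Finset ℕ} {α β : ℕ → Circle} {c : ℝ} (hc : 0 ≤ c)
    (h : ∀ i ∈ I, ∀ j ∈ I, ‖(α i : ℂ) * (starRingEnd ℂ) (α j : ℂ) -
      (β i : ℂ) * (starRingEnd ℂ) (β j : ℂ)‖ ≤ c) : Delta I α β ≤ c := by
  have : ((I ×ˢ I).sup fun p : ℕ × ℕ =>
    (‖(α p.1 : ℂ) * (starRingEnd ℂ) (α p.2 : ℂ) -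
      (β p.1 : ℂ) * (starRingEnd ℂ) (β p.2 : ℂ)‖₊ : NNReal)) ≤ Real.toNNReal c := by
    apply Finset.sup_le
    intro p hp
    rw [Finset.mem_product] at hp
    rw [← NNReal.coe_le_coe, coe_nnnorm, Real.coe_toNNReal _ hc]
    exact h p.1 hp.1 p.2 hp.2
  calc Delta I α β ≤ (Real.toNNReal c : ℝ) := NNReal.coe_le_coe.2 this
    _ = c := Real.coe_toNNReal _ hc



variable {X : Set ℕ}

lemma grid_infinite (hX : X.Infinite) : {n | n ∈ insert 0 X}.Infinite :=
  hX.mono (Set.subset_insert 0 X)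

lemma nEnum_strictMono (hX : X.Infinite) : StrictMono (nEnum X) :=
  Nat.nth_strictMono (grid_infinite hX)

lemma nEnum_mem (hX : X.Infinite) (j : ℕ) : nEnum X j ∈ insert 0 X :=
  Nat.nth_mem_of_infinite (grid_infinite hX) j

lemma nEnum_zero : nEnum X 0 = 0 :=
  Nat.nth_zero_of_zero (by simp : (0 : ℕ) ∈ insert 0 X)

lemma nEnum_le_apply (hX : X.Infinite) (j : ℕ) : j ≤ nEnum X j :=
  (nEnum_strictMono hX).le_apply

/-- coverage: every `i` lies in some block `[nEnum j, nEnum (j+1))`. -/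
lemma exists_block (hX : X.Infinite) (i : ℕ) :
    ∃ j, nEnum X j ≤ i ∧ i < nEnum X (j + 1) := by
  classical
  set P : ℕ → Prop := fun s => nEnum X s ≤ i with hP
  have hP0 : P 0 := by simp [hP, nEnum_zero]
  refine ⟨Nat.findGreatest P i, Nat.findGreatest_spec (Nat.zero_le i) hP0, ?_⟩
  by_contra h
  push_neg at h
  have h1 : Nat.findGreatest P i + 1 ≤ i := le_trans (nEnum_le_apply hX _) h
  have h2 : P (Nat.findGreatest P i + 1) := h
  have := Nat.le_findGreatest (P := P) h1 h2
  omega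

/-- a grid point strictly between `nEnum j` and `nEnum (j+2)` is `nEnum (j+1)`. -/
lemma grid_between (hX : X.Infinite) {g j : ℕ} (hg : g ∈ insert 0 X)
    (h1 : nEnum X j < g) (h2 : g < nEnum X (j + 2)) : g = nEnum X (j + 1) := by
  classical
  have hginf := grid_infinite hX
  have hnth : Nat.nth (· ∈ insert 0 X) (Nat.count (· ∈ insert 0 X) g) = g :=
    Nat.nth_count hg
  simp only [nEnum] at h1 h2 ⊢
  rw [← hnth] at h1 h2
  rw [Nat.nth_lt_nth hginf] at h1 h2
  have heq : Nat.count (· ∈ insert 0 X) g = j + 1 := by omega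
  rw [← hnth, heq]

def Good (X : Set ℕ) (γ : ℕ → Circle) : Prop :=
  ∀ ε : ℝ, 0 < ε → ∃ N : ℕ, ∀ i i' : ℕ, N ≤ i → i ≤ i' →
    (insert 0 X ∩ Set.Ioc i i').Subsingleton → q γ i i' ≤ ε

lemma entry_eq_q (γ : ℕ → Circle) (i j : ℕ) :
    ‖(γ i : ℂ) * (starRingEnd ℂ) (γ j : ℂ) -
      (((1 : ℕ → Circle) i : Circle) : ℂ) * (starRingEnd ℂ) (((1 : ℕ → Circle) j : Circle) : ℂ)‖
      = q γ i j := by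
  simp [q_eq_norm]

lemma mem_union_bounds {X : Set ℕ} (hX : X.Infinite) {j a : ℕ}
    (ha : a ∈ intvl X j ∪ intvl X (j + 1)) :
    nEnum X j ≤ a ∧ a < nEnum X (j + 2) := by
  have m1 : nEnum X j ≤ nEnum X (j+1) := (nEnum_strictMono hX).monotone (by omega)
  have m2 : nEnum X (j+1) ≤ nEnum X (j+2) := (nEnum_strictMono hX).monotone (by omega)
  have e : nEnum X (j+1+1) = nEnum X (j+2) := by norm_num
  rcases Finset.mem_union.1 ha with h | h <;> rw [intvl, Finset.mem_Ico] at h <;> omega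

lemma memF_iff_good {X : Set ℕ} (hX : X.Infinite) (γ : ℕ → Circle) :
    memF X γ ↔ Good X γ := by
  constructor
  · intro h ε hε
    rw [memF, Metric.tendsto_atTop] at h
    obtain ⟨N, hN⟩ := h ε hε
    refine ⟨nEnum X (N + 1), fun i i' hi hii hsub => ?_⟩
    obtain ⟨j, hj1, hj2⟩ := exists_block hX i
    have hjN : N ≤ j := by
      have : nEnum X (N + 1) < nEnum X (j + 1) := lt_of_le_of_lt hi hj2
      have := (nEnum_strictMono hX).lt_iff_lt.1 this
      omega
    have hi2 : i' < nEnum X (j + 2) := by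
      by_contra hc
      push_neg at hc
      have e1 : nEnum X (j+1) ∈ insert 0 X ∩ Set.Ioc i i' :=
        ⟨nEnum_mem hX _, hj2, le_trans ((nEnum_strictMono hX).monotone (by omega)) hc⟩
      have e2 : nEnum X (j+2) ∈ insert 0 X ∩ Set.Ioc i i' :=
        ⟨nEnum_mem hX _, lt_of_lt_of_le hj2 ((nEnum_strictMono hX).monotone (by omega)), hc⟩
      have := hsub e1 e2
      have := nEnum_strictMono hX (show j+1 < j+2 by omega)
      omega
    have hiI : i ∈ intvl X j ∪ intvl X (j + 1) :=
      Finset.mem_union.2 (Or.inl (Finset.mem_Ico.2 ⟨hj1, hj2⟩))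
    have hi'I : i' ∈ intvl X j ∪ intvl X (j + 1) := by
      rcases lt_or_ge i' (nEnum X (j+1)) with hlt | hge
      · exact Finset.mem_union.2 (Or.inl (Finset.mem_Ico.2 ⟨le_trans hj1 hii, hlt⟩))
      · exact Finset.mem_union.2 (Or.inr (Finset.mem_Ico.2 ⟨hge, hi2⟩))
    have hle := le_delta (α := γ) (β := 1) hiI hi'I
    rw [entry_eq_q] at hle
    have hd := hN j hjN
    rw [Real.dist_eq, sub_zero, abs_of_nonneg (delta_nonneg _ _ _)] at hd
    exact le_of_lt (lt_of_le_of_lt hle hd)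
  · intro h
    rw [memF, Metric.tendsto_atTop]
    intro ε hε
    obtain ⟨N, hN⟩ := h (ε/2) (half_pos hε)
    refine ⟨N, fun j hj => ?_⟩
    rw [Real.dist_eq, sub_zero, abs_of_nonneg (delta_nonneg _ _ _)]
    have hD : Delta (intvl X j ∪ intvl X (j+1)) γ 1 ≤ ε/2 := by
      apply delta_le (le_of_lt (half_pos hε))
      intro a ha b hb
      rw [entry_eq_q]
      obtain ⟨ha1, ha2⟩ := mem_union_bounds hX ha
      obtain ⟨hb1, hb2⟩ := mem_union_bounds hX hb
      have key : ∀ u v : ℕ, nEnum X j ≤ u → u ≤ v → v < nEnum X (j + 2) →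
          q γ u v ≤ ε / 2 := by
        intro u v hu huv hv
        apply hN u v (le_trans (le_trans hj (nEnum_le_apply hX j)) hu) huv
        intro g1 ⟨hg1, hg1'⟩ g2 ⟨hg2, hg2'⟩
        have e1 : g1 = nEnum X (j+1) :=
          grid_between hX hg1 (lt_of_le_of_lt hu hg1'.1) (lt_of_le_of_lt hg1'.2 hv)
        have e2 : g2 = nEnum X (j+1) :=
          grid_between hX hg2 (lt_of_le_of_lt hu hg2'.1) (lt_of_le_of_lt hg2'.2 hv)
        rw [e1, e2]
      rcases le_total a b with hab | hba
      · exact key a b ha1 hab hb2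
      · rw [q_symm]; exact key b a hb1 hba ha2
    linarith
lemma almost_bound {A B : Set ℕ} (h : AlmostSubset A B) :
    ∃ k, ∀ x ∈ A, k ≤ x → x ∈ B := by
  obtain ⟨c, hc⟩ := h.bddAbove
  refine ⟨c + 1, fun x hx hk => ?_⟩
  by_contra hxB
  have : x ≤ c := hc ⟨hx, hxB⟩
  omega


/-- a coherent `ω`-sequence of elements of `𝕋^ℕ` along a decreasing
chain admits a lower bound (a "partial thread" can be extended through a limit). -/
theorem limit_stage (X : ℕ → Set ℕ) (hXinf : ∀ n, (X n).Infinite)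
    (hXdec : ∀ n, AlmostSubset (X (n + 1)) (X n))
    (α : ℕ → ℕ → Circle)
    (hcoh : ∀ n m : ℕ, n ≤ m → memF (X n) (α n * (α m)⁻¹))
    (Y : Set ℕ) (hY : Y.Infinite) (hYX : ∀ n, AlmostSubset Y (X n)) :
    ∃ β : ℕ → Circle, ∀ n, memF (X n) (β * (α n)⁻¹) := by
  classical
  -- coherence in the convenient direction
  have hg : ∀ n m : ℕ, n ≤ m → Good (X n) (α m * (α n)⁻¹) := by
    intro n m hnm
    have h1 : Good (X n) (α n * (α m)⁻¹) := (memF_iff_good (hXinf n) _).1 (hcoh n m hnm)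
    intro ε hε
    obtain ⟨N, hN⟩ := h1 ε hε
    refine ⟨N, fun i i' h2 h3 h4 => ?_⟩
    have key : (α m * (α n)⁻¹) i * ((α m * (α n)⁻¹) i')⁻¹ =
        ((α n * (α m)⁻¹) i * ((α n * (α m)⁻¹) i')⁻¹)⁻¹ := by
      simp only [Pi.mul_apply, Pi.inv_apply]
      apply Circle.coe_injective; push_cast; field_simp; try ring
    rw [q, key, norm_inv_sub_one, ← q]
    exact hN i i' h2 h3 h4
  -- quantitative thresholds
  have hT : ∀ n m s : ℕ, ∃ N : ℕ, n ≤ m →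
      ∀ i i', N ≤ i → i ≤ i' → (insert 0 (X n) ∩ Set.Ioc i i').Subsingleton →
        q (α m * (α n)⁻¹) i i' ≤ 1 / (s + 1) := by
    intro n m s
    by_cases h : n ≤ m
    · obtain ⟨N, hN⟩ := hg n m h (1 / (s + 1)) (by positivity)
      exact ⟨N, fun _ => hN⟩
    · exact ⟨0, fun h' => absurd h' h⟩
  choose T hT using hT
  choose G hG using fun n => almost_bound (hYX n)
  set M : ℕ → ℕ := fun s =>
    max (((Finset.range (s + 1)) ×ˢ (Finset.range (s + 1))).sup fun nm => T nm.1 nm.2 s)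
      ((Finset.range (s + 1)).sup G) with hM_def
  have hM1 : ∀ {n m s : ℕ}, n ≤ m → m ≤ s →
      ∀ i i', M s ≤ i → i ≤ i' → (insert 0 (X n) ∩ Set.Ioc i i').Subsingleton →
        q (α m * (α n)⁻¹) i i' ≤ 1 / (s + 1) := by
    intro n m s hnm hms i i' hi hii hsub
    have hle : T n m s ≤ M s := le_trans
      (Finset.le_sup (f := fun nm : ℕ × ℕ => T nm.1 nm.2 s)
        (Finset.mem_product.2 ⟨Finset.mem_range.2 (by omega), Finset.mem_range.2 (by omega)⟩
          : ((n, m) : ℕ × ℕ) ∈ _)) (le_max_left _ _)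
    exact hT n m s hnm i i' (le_trans hle hi) hii hsub
  have hM2 : ∀ {n s : ℕ}, n ≤ s → ∀ z ∈ Y, M s ≤ z → z ∈ X n := by
    intro n s hns z hz hMz
    have hle : G n ≤ M s := le_trans
      (Finset.le_sup (Finset.mem_range.2 (by omega))) (le_max_right _ _)
    exact hG n z hz (le_trans hle hMz)
  -- boundary sequence
  have hnext : ∀ k : ℕ, ∃ z ∈ Y, k < z := hY.exists_gt
  choose nxt hnxtY hnxtlt using hnext
  set y : ℕ → ℕ := fun s => Nat.rec 0 (fun s prev => nxt (max prev (M (s + 1)))) s with hy_def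
  have hysucc : ∀ s, y (s + 1) = nxt (max (y s) (M (s + 1))) := fun s => rfl
  have hyY : ∀ s, y (s + 1) ∈ Y := fun s => hnxtY _
  have hyMono : StrictMono y := strictMono_nat_of_lt_succ fun s =>
    lt_of_le_of_lt (le_max_left _ _) (hnxtlt _)
  have hyM : ∀ s, M (s + 1) ≤ y (s + 1) := fun s =>
    le_of_lt (lt_of_le_of_lt (le_max_right _ _) (hnxtlt _))
  have hyge : ∀ s, s ≤ y s := fun s => hyMono.le_apply
  have hy0 : y 0 = 0 := rfl
  -- block function
  set σ : ℕ → ℕ := fun i => Nat.findGreatest (fun s => y s ≤ i) i with hσ_def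
  have hσ1 : ∀ i, y (σ i) ≤ i := fun i =>
    Nat.findGreatest_spec (P := fun s => y s ≤ i) (Nat.zero_le i) (by simp [hy0])
  have hσ2 : ∀ i, i < y (σ i + 1) := by
    intro i
    by_contra h
    push_neg at h
    have h1 : σ i + 1 ≤ i := le_trans (hyge _) h
    have h3 : σ i + 1 ≤ σ i := Nat.le_findGreatest (P := fun s => y s ≤ i) h1 h
    omega
  have hσ4 : ∀ s i, y s ≤ i → s ≤ σ i := fun s i hs =>
    Nat.le_findGreatest (le_trans (hyge s) hs) hs
  -- phases
  set lam : ℕ → Circle := fun s =>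
    Nat.rec 1 (fun s prev => prev * α s (y (s + 1)) * (α (s + 1) (y (s + 1)))⁻¹) s with hlam_def
  have hlam : ∀ s, lam (s + 1) = lam s * α s (y (s + 1)) * (α (s + 1) (y (s + 1)))⁻¹ :=
    fun s => rfl
  refine ⟨fun i => lam (σ i) * α (σ i) i, fun n => ?_⟩
  set β : ℕ → Circle := fun i => lam (σ i) * α (σ i) i with hβ_def
  rw [memF_iff_good (hXinf n)]
  intro ε hε
  obtain ⟨k, hk⟩ : ∃ k : ℕ, 2 / ((k : ℝ) + 1) < ε := by
    obtain ⟨k, hk⟩ := exists_nat_gt (2 / ε)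
    refine ⟨k, ?_⟩
    rw [div_lt_iff₀ (by positivity)]
    rw [div_lt_iff₀ hε] at hk
    nlinarith
  set s₀ : ℕ := max n k with hs₀_def
  refine ⟨y (s₀ + 1), fun i i' hi hii hsub => ?_⟩
  set s := σ i with hs_def
  set t := σ i' with ht_def
  have hs0 : s₀ + 1 ≤ s := hσ4 _ _ hi
  have hns : n ≤ s := by have := le_max_left n k; omega
  have hks : k ≤ s := by have := le_max_right n k; omega
  have hst : s ≤ t := hσ4 s i' (le_trans (hσ1 i) hii)
  have hbound : ∀ u, s₀ + 1 ≤ u → y u ∈ X n := by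
    intro u hu
    obtain ⟨u', rfl⟩ : ∃ u', u = u' + 1 := ⟨u - 1, by omega⟩
    exact hM2 (show n ≤ u' + 1 by have := le_max_left n k; omega) _ (hyY u') (hyM u')
  have hMyle : ∀ u, 1 ≤ u → M u ≤ y u := by
    intro u hu
    obtain ⟨u', rfl⟩ : ∃ u', u = u' + 1 := ⟨u - 1, by omega⟩
    exact hyM u'
  have hMsi : M s ≤ i := le_trans (hMyle s (by omega)) (hσ1 i)
  -- at most one boundary crossed
  have hts : t ≤ s + 1 := by
    by_contra hc
    push_neg at hc
    have h1 : y (s + 1) ∈ insert 0 (X n) ∩ Set.Ioc i i' :=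
      ⟨Set.mem_insert_of_mem _ (hbound (s + 1) (by omega)),
        hσ2 i, le_trans (hyMono.monotone (show s + 1 ≤ t by omega)) (hσ1 i')⟩
    have h2 : y (s + 2) ∈ insert 0 (X n) ∩ Set.Ioc i i' :=
      ⟨Set.mem_insert_of_mem _ (hbound (s + 2) (by omega)),
        lt_trans (hσ2 i) (hyMono (show s + 1 < s + 2 by omega)),
        le_trans (hyMono.monotone (show s + 2 ≤ t by omega)) (hσ1 i')⟩
    have := hsub h1 h2
    have := hyMono (show s + 1 < s + 2 by omega)
    omega
  have hfrac : 1 / ((s : ℝ) + 1) ≤ 1 / ((k : ℝ) + 1) := by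
    apply one_div_le_one_div_of_le (by positivity)
    have : (k : ℝ) ≤ s := by exact_mod_cast hks
    linarith
  rcases eq_or_lt_of_le hst with he | hlt
  · -- same block
    have hqe : q (β * (α n)⁻¹) i i' = q (α s * (α n)⁻¹) i i' := by
      have key : (β * (α n)⁻¹) i * ((β * (α n)⁻¹) i')⁻¹ =
          (α s * (α n)⁻¹) i * ((α s * (α n)⁻¹) i')⁻¹ := by
        simp only [Pi.mul_apply, Pi.inv_apply]
        rw [show β i = lam s * α s i from rfl, show β i' = lam t * α t i' from rfl, ← he]
        apply Circle.coe_injective; push_cast; field_simp; try ring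
      rw [q, key, ← q]
    rw [hqe]
    have := hM1 hns (le_refl s) i i' hMsi hii hsub
    calc q (α s * (α n)⁻¹) i i' ≤ 1 / ((s : ℝ) + 1) := by exact_mod_cast this
      _ ≤ 1 / ((k : ℝ) + 1) := hfrac
      _ ≤ 2 / ((k : ℝ) + 1) := by
          have h0 : (0:ℝ) ≤ 1 / ((k : ℝ) + 1) := by positivity
          rw [show (2:ℝ) / ((k:ℝ)+1) = 1/((k:ℝ)+1) + 1/((k:ℝ)+1) by ring]
          linarith
      _ ≤ ε := le_of_lt hk
  · -- adjacent blocks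
    have ht1 : t = s + 1 := by omega
    set p := y (s + 1) with hp_def
    have hip : i < p := hσ2 i
    have hpi' : p ≤ i' := by rw [hp_def, ← ht1]; exact hσ1 i'
    have hsplit : q (β * (α n)⁻¹) i i' ≤
        q (α s * (α n)⁻¹) i p + q (α (s + 1) * (α n)⁻¹) p i' := by
      have key : (β * (α n)⁻¹) i * ((β * (α n)⁻¹) i')⁻¹ =
          ((α s * (α n)⁻¹) i * ((α s * (α n)⁻¹) p)⁻¹) *
            ((α (s + 1) * (α n)⁻¹) p * ((α (s + 1) * (α n)⁻¹) i')⁻¹) := by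
        simp only [Pi.mul_apply, Pi.inv_apply]
        rw [show β i = lam s * α s i from rfl, show β i' = lam t * α t i' from rfl,
          ht1, hlam s]
        apply Circle.coe_injective; push_cast; field_simp; try ring
      rw [q, key]
      exact le_trans (norm_mul_sub_one _ _) (by rw [q, q])
    have hq1 : q (α s * (α n)⁻¹) i p ≤ 1 / ((s : ℝ) + 1) := by
      have := hM1 hns (le_refl s) i p hMsi (le_of_lt hip)
        (hsub.anti (Set.inter_subset_inter_right _ (Set.Ioc_subset_Ioc_right hpi')))
      exact_mod_cast this
    have hq2 : q (α (s + 1) * (α n)⁻¹) p i' ≤ 1 / ((s : ℝ) + 1) := by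
      have h2 := hM1 (show n ≤ s + 1 by omega) (le_refl (s + 1)) p i'
        (le_trans (hyM s) (le_refl p)) hpi'
        (hsub.anti (Set.inter_subset_inter_right _ (Set.Ioc_subset_Ioc_left (le_of_lt hip))))
      calc q (α (s + 1) * (α n)⁻¹) p i' ≤ 1 / ((s : ℝ) + 1 + 1) := by exact_mod_cast h2
        _ ≤ 1 / ((s : ℝ) + 1) := by
            apply one_div_le_one_div_of_le (by positivity); linarith
    calc q (β * (α n)⁻¹) i i' ≤ _ + _ := hsplit
      _ ≤ 1 / ((s : ℝ) + 1) + 1 / ((s : ℝ) + 1) := add_le_add hq1 hq2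
      _ = 2 / ((s : ℝ) + 1) := by ring
      _ ≤ 2 / ((k : ℝ) + 1) := by
          rw [show (2:ℝ) / ((s:ℝ)+1) = 1/((s:ℝ)+1) + 1/((s:ℝ)+1) by ring,
            show (2:ℝ) / ((k:ℝ)+1) = 1/((k:ℝ)+1) + 1/((k:ℝ)+1) by ring]
          linarith
      _ ≤ ε := le_of_lt hk
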